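/- arXiv:2309.14676 — 6 statements merged into one kernel-verified Lean document; each statement's English description precedes it below -/
import Mathlib

section
/- Let J be the standard 2m×2m symplectic matrix (J = [[0, I_m],[-I_m, 0]]). Then the span over C of the matrices {r (Jr)^T : r ∈ Z^{2m}} equals the symplectic Lie algebra sp_{2m}(C) = {X : JX = -X^T J}. -/
open Matrix

noncomputable def Jstd (m : ℕ) : Matrix (Fin m ⊕ Fin m) (Fin m ⊕ Fin m) ℂ :=
  Matrix.fromBlocks 0 1 (-1) 0

section Aux

variable {n : Type*} [Fintype n] [DecidableEq n]

omit [DecidableEq n] in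
lemma mul_vecMulVec' (M : Matrix n n ℂ) (a b : n → ℂ) :
    M * vecMulVec a b = vecMulVec (M *ᵥ a) b := by
  ext i j
  simp [Matrix.mul_apply, vecMulVec_apply, Matrix.mulVec, dotProduct, Finset.sum_mul, mul_assoc]

omit [DecidableEq n] in
lemma vecMulVec_mul' (M : Matrix n n ℂ) (a b : n → ℂ) :
    vecMulVec a b * M = vecMulVec a (b ᵥ* M) := by
  ext i j
  simp [Matrix.mul_apply, vecMulVec_apply, Matrix.vecMul, dotProduct, Finset.mul_sum, mul_assoc,
    mul_comm, mul_left_comm]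

omit [Fintype n] [DecidableEq n] in
lemma vecMulVec_neg_right' (a b : n → ℂ) :
    vecMulVec a (-b) = -vecMulVec a b := by
  ext i j; simp [vecMulVec_apply]

omit [Fintype n] [DecidableEq n] in
lemma vecMulVec_transpose' (a b : n → ℂ) :
    (vecMulVec a b)ᵀ = vecMulVec b a := by
  ext i j
  simp [vecMulVec_apply, mul_comm]

lemma JT (m : ℕ) : (Jstd m)ᵀ = -(Jstd m) := by
  ext i j
  rcases i with i | i <;> rcases j with j | j <;>
    simp [Jstd, Matrix.transpose_apply, Matrix.fromBlocks, Matrix.one_apply, eq_comm]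

lemma JJ (m : ℕ) : Jstd m * Jstd m = -1 := by
  rw [Jstd, Matrix.fromBlocks_multiply]
  ext i j
  rcases i with i | i <;> rcases j with j | j <;>
    simp [Matrix.fromBlocks, Matrix.one_apply]

lemma J_mulVec (m : ℕ) (a : Fin m ⊕ Fin m → ℂ) :
    Jstd m *ᵥ a = Sum.elim (fun i => a (Sum.inr i)) (fun i => -a (Sum.inl i)) := by
  funext x
  rcases x with i | i <;>
    simp [Jstd, Matrix.mulVec, dotProduct, Matrix.fromBlocks, Fintype.sum_sum_type,
      Matrix.one_apply, ite_mul]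

lemma single_outer (i j : n) :
    vecMulVec (Pi.single i (1:ℂ)) (Pi.single j 1) = Matrix.single i j 1 := by
  ext k l
  simp only [vecMulVec_apply, Matrix.single, Matrix.of_apply, Pi.single_apply]
  rcases eq_or_ne i k with rfl | h1
  · rcases eq_or_ne j l with rfl | h2
    · simp
    · simp [h2, Ne.symm h2]
  · simp [h1, Ne.symm h1]

lemma pair_key (i j : n) :
    (Matrix.single i j (1:ℂ)) + Matrix.single j i 1 =
      vecMulVec (fun k => ((Pi.single i 1 + Pi.single j 1 : n → ℤ) k : ℂ))
        (fun k => ((Pi.single i 1 + Pi.single j 1 : n → ℤ) k : ℂ))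
      - vecMulVec (fun k => ((Pi.single i 1 : n → ℤ) k : ℂ)) (fun k => ((Pi.single i 1 : n → ℤ) k : ℂ))
      - vecMulVec (fun k => ((Pi.single j 1 : n → ℤ) k : ℂ)) (fun k => ((Pi.single j 1 : n → ℤ) k : ℂ)) := by
  have c2 : ∀ a : n, (fun k => (((Pi.single a 1 : n → ℤ)) k : ℂ)) = Pi.single a (1:ℂ) := by
    intro a; funext k
    simp [Pi.single_apply, apply_ite (fun z : ℤ => (z : ℂ))]
  have c1 : (fun k => ((Pi.single i 1 + Pi.single j 1 : n → ℤ) k : ℂ))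
      = Pi.single i (1:ℂ) + Pi.single j 1 := by
    funext k
    simp [Pi.single_apply, Pi.add_apply, apply_ite (fun z : ℤ => (z : ℂ))]
  have expand : ∀ a b : n → ℂ, vecMulVec (a + b) (a + b)
      = vecMulVec a a + vecMulVec a b + vecMulVec b a + vecMulVec b b := by
    intro a b; ext k l
    simp only [vecMulVec_apply, Pi.add_apply, Matrix.add_apply]
    ring
  rw [c1, c2, c2, expand, single_outer, single_outer, single_outer, single_outer]
  abel

lemma pair_mem_span (i j : n) :
    (Matrix.single i j (1:ℂ)) + Matrix.single j i 1 ∈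
      Submodule.span ℂ {A : Matrix n n ℂ |
        ∃ v : n → ℤ, A = vecMulVec (fun k => (v k : ℂ)) (fun k => (v k : ℂ))} := by
  rw [pair_key i j]
  have hmem : ∀ v : n → ℤ,
      vecMulVec (fun k => (v k : ℂ)) (fun k => (v k : ℂ)) ∈ Submodule.span ℂ
        {A : Matrix n n ℂ | ∃ v : n → ℤ, A = vecMulVec (fun k => (v k : ℂ)) (fun k => (v k : ℂ))} :=
    fun v => Submodule.subset_span ⟨v, rfl⟩
  exact sub_mem (sub_mem (hmem _) (hmem _)) (hmem _)

lemma symm_mem_span (S : Matrix n n ℂ) (hS : Sᵀ = S) :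
    S ∈ Submodule.span ℂ {A : Matrix n n ℂ |
      ∃ v : n → ℤ, A = vecMulVec (fun k => (v k : ℂ)) (fun k => (v k : ℂ))} := by
  have expand : ∑ i : n, ∑ j : n, S i j • ((Matrix.single i j (1:ℂ)) + Matrix.single j i 1)
      = (2:ℂ) • S := by
    have h1 : ∑ i : n, ∑ j : n, S i j • Matrix.single i j (1:ℂ) = S := by
      conv_rhs => rw [matrix_eq_sum_single S]
      simp [smul_single]
    have h2 : ∑ i : n, ∑ j : n, S i j • Matrix.single j i (1:ℂ) = Sᵀ := by
      rw [Finset.sum_comm]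
      conv_rhs => rw [matrix_eq_sum_single Sᵀ]
      simp [smul_single, Matrix.transpose_apply]
    simp only [smul_add, Finset.sum_add_distrib, h1, h2, hS, two_smul]
  have key : S = (2:ℂ)⁻¹ • ∑ i : n, ∑ j : n,
      S i j • ((Matrix.single i j (1:ℂ)) + Matrix.single j i 1) := by
    rw [expand, smul_smul]; norm_num
  rw [key]
  exact Submodule.smul_mem _ _ (Submodule.sum_mem _ fun i _ =>
    Submodule.sum_mem _ fun j _ => Submodule.smul_mem _ _ (pair_mem_span i j))

end Aux

theorem span_outer_products_eq_sp (m : ℕ) :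
    (Submodule.span ℂ
      {X : Matrix (Fin m ⊕ Fin m) (Fin m ⊕ Fin m) ℂ |
        ∃ r : Fin m ⊕ Fin m → ℤ,
          X = vecMulVec (fun i => (r i : ℂ)) (Jstd m *ᵥ (fun i => (r i : ℂ)))} :
      Set (Matrix (Fin m ⊕ Fin m) (Fin m ⊕ Fin m) ℂ))
    = {X : Matrix (Fin m ⊕ Fin m) (Fin m ⊕ Fin m) ℂ |
        Jstd m * X = -Xᵀ * Jstd m} := by
  apply Set.Subset.antisymm
  · -- span ⊆ sp
    intro X hX
    induction hX using Submodule.span_induction with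
    | mem Y hY =>
      obtain ⟨r, rfl⟩ := hY
      set a : Fin m ⊕ Fin m → ℂ := fun i => (r i : ℂ)
      show Jstd m * vecMulVec a (Jstd m *ᵥ a) = -(vecMulVec a (Jstd m *ᵥ a))ᵀ * Jstd m
      conv_lhs => rw [mul_vecMulVec']
      rw [vecMulVec_transpose', neg_mul, vecMulVec_mul', ← Matrix.mulVec_transpose, JT,
        Matrix.neg_mulVec, vecMulVec_neg_right', neg_neg]
    | zero => show Jstd m * 0 = -(0:Matrix _ _ ℂ)ᵀ * Jstd m; simp
    | add x y hx hy hx' hy' =>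
      show Jstd m * (x + y) = -(x+y)ᵀ * Jstd m
      have hx'' : Jstd m * x = -xᵀ * Jstd m := hx'
      have hy'' : Jstd m * y = -yᵀ * Jstd m := hy'
      rw [mul_add, hx'', hy'', Matrix.transpose_add]
      noncomm_ring
    | smul c x hx hx' =>
      show Jstd m * (c • x) = -(c • x)ᵀ * Jstd m
      have hx'' : Jstd m * x = -xᵀ * Jstd m := hx'
      rw [Matrix.mul_smul, hx'', Matrix.transpose_smul]
      simp [Matrix.smul_mul]
  · -- sp ⊆ span
    intro X hX
    have h : Jstd m * X = -Xᵀ * Jstd m := hX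
    have hX' : Jstd m * X = -(Xᵀ * Jstd m) := by rw [h, neg_mul]
    have hSsymm : (Jstd m * X)ᵀ = Jstd m * X := by
      rw [Matrix.transpose_mul, JT, Matrix.mul_neg, ← neg_mul]
      exact h.symm
    have hS := symm_mem_span (Jstd m * X) hSsymm
    have hmain : ∀ Y ∈ Submodule.span ℂ {A : Matrix (Fin m ⊕ Fin m) (Fin m ⊕ Fin m) ℂ |
        ∃ v : Fin m ⊕ Fin m → ℤ, A = vecMulVec (fun k => (v k : ℂ)) (fun k => (v k : ℂ))},
        (-(Jstd m)) * Y ∈ Submodule.span ℂ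
          {X : Matrix (Fin m ⊕ Fin m) (Fin m ⊕ Fin m) ℂ |
            ∃ r : Fin m ⊕ Fin m → ℤ,
              X = vecMulVec (fun i => (r i : ℂ)) (Jstd m *ᵥ (fun i => (r i : ℂ)))} := by
      intro Y hY
      induction hY using Submodule.span_induction with
      | mem A hA =>
        obtain ⟨v, rfl⟩ := hA
        set a : Fin m ⊕ Fin m → ℂ := fun k => (v k : ℂ) with ha
        apply Submodule.subset_span
        refine ⟨Sum.elim (fun i => -v (Sum.inr i)) (fun i => v (Sum.inl i)), ?_⟩
        set w : Fin m ⊕ Fin m → ℤ := Sum.elim (fun i => -v (Sum.inr i)) (fun i => v (Sum.inl i))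
          with hwdef
        have hw : (fun k => ((w k : ℤ) : ℂ)) = -(Jstd m *ᵥ a) := by
          funext x
          rcases x with i | i <;> simp [w, J_mulVec, ha]
        have hw2 : Jstd m *ᵥ (fun k => ((w k : ℤ) : ℂ)) = a := by
          rw [hw, Matrix.mulVec_neg, Matrix.mulVec_mulVec, JJ]
          simp [Matrix.neg_mulVec]
        rw [hw2, mul_vecMulVec', Matrix.neg_mulVec, hw]
      | zero => simp
      | add x y hx hy hx' hy' => rw [mul_add]; exact add_mem hx' hy'
      | smul c x hx hx' => rw [mul_smul_comm]; exact Submodule.smul_mem _ _ hx'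
    have hfinal : (-(Jstd m)) * (Jstd m * X) = X := by
      rw [← Matrix.mul_assoc, Matrix.neg_mul, JJ]
      simp
    have := hmain _ hS
    rwa [hfinal] at this
end

section
/- Let B be a non-degenerate N×N complex skew-symmetric matrix. Then the span of {r (Br)^T : r ∈ Z^N} equals G_B = {X ∈ gl_N(C) : BX = -X^T B}. In particular the linear map ψ_B sending T(r) to r(Br)^T is surjective onto G_B. -/
open Matrix

theorem span_outer_products_eq_GB (N : ℕ) (B : Matrix (Fin N) (Fin N) ℂ)
    (hB : Bᵀ = -B) (hInv : IsUnit B.det) :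
    (Submodule.span ℂ
      {X : Matrix (Fin N) (Fin N) ℂ |
        ∃ r : Fin N → ℤ,
          X = vecMulVec (fun i => (r i : ℂ)) (B *ᵥ (fun i => (r i : ℂ)))} :
      Set (Matrix (Fin N) (Fin N) ℂ))
    = {X : Matrix (Fin N) (Fin N) ℂ | B * X = -Xᵀ * B} := by
  have hBent : ∀ i j, B i j = -B j i := by
    intro i j
    have := congrFun (congrFun hB j) i
    simpa [transpose_apply] using this
  apply Set.Subset.antisymm
  · -- span ⊆ G_B
    intro X hX
    refine Submodule.span_induction ?_ ?_ ?_ ?_ hX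
    · rintro Y ⟨r, rfl⟩
      set c : Fin N → ℂ := fun i => (r i : ℂ)
      ext k l
      simp only [mul_apply, vecMulVec_apply, neg_mul, Matrix.neg_apply, transpose_apply, mulVec,
        dotProduct]
      have e1 : ∑ x, B k x * (c x * ∑ y, B l y * c y)
          = (∑ x, B k x * c x) * (∑ y, B l y * c y) := by
        rw [Finset.sum_mul]
        exact Finset.sum_congr rfl fun x _ => by ring
      have e2 : ∑ x, c x * (∑ y, B k y * c y) * B x l
          = (∑ y, B k y * c y) * (∑ x, c x * B x l) := by
        rw [Finset.mul_sum]
        exact Finset.sum_congr rfl fun x _ => by ring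
      have e3 : ∑ x, c x * B x l = -∑ y, B l y * c y := by
        rw [← Finset.sum_neg_distrib]
        exact Finset.sum_congr rfl fun x _ => by rw [hBent x l]; ring
      calc ∑ x, B k x * (c x * ∑ y, B l y * c y)
          = (∑ x, B k x * c x) * (∑ y, B l y * c y) := e1
        _ = -((∑ y, B k y * c y) * -∑ y, B l y * c y) := by ring
        _ = -((∑ y, B k y * c y) * ∑ x, c x * B x l) := by rw [e3]
        _ = -∑ x, c x * (∑ y, B k y * c y) * B x l := by rw [e2]
        _ = ∑ x, -(c x * (∑ y, B k y * c y) * B x l) := by rw [Finset.sum_neg_distrib]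
    · simp
    · intro Y Z _ _ hY hZ
      simp only [Set.mem_setOf_eq] at *
      rw [mul_add, transpose_add, hY, hZ]; noncomm_ring
    · intro a Y _ hY
      simp only [Set.mem_setOf_eq] at *
      rw [mul_smul_comm, hY, transpose_smul, ← smul_neg, Matrix.smul_mul]
  · -- G_B ⊆ span
    intro X hX
    simp only [Set.mem_setOf_eq] at hX
    set V := Submodule.span ℂ
      {X : Matrix (Fin N) (Fin N) ℂ |
        ∃ r : Fin N → ℤ,
          X = vecMulVec (fun i => (r i : ℂ)) (B *ᵥ (fun i => (r i : ℂ)))} with hV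
    set S := X * B⁻¹ with hSdef
    have hSB : S * B = X := Matrix.nonsing_inv_mul_cancel_right B X hInv
    have hSsym : Sᵀ = S := by
      have h1 : S = -(B⁻¹ * Xᵀ) := by
        have heq : B⁻¹ * (B * X) * B⁻¹ = B⁻¹ * (-Xᵀ * B) * B⁻¹ := by rw [hX]
        have h2 : B⁻¹ * (B * X) * B⁻¹ = X * B⁻¹ := by
          rw [← Matrix.mul_assoc, Matrix.nonsing_inv_mul B hInv, one_mul]
        have h3 : B⁻¹ * (-Xᵀ * B) * B⁻¹ = -(B⁻¹ * Xᵀ) := by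
          rw [Matrix.neg_mul, Matrix.mul_neg, Matrix.neg_mul, Matrix.mul_assoc B⁻¹ (Xᵀ * B) B⁻¹,
            Matrix.mul_assoc (Xᵀ) B B⁻¹, Matrix.mul_nonsing_inv B hInv, Matrix.mul_one]
        rw [hSdef, ← h2, heq, h3]
      have hBiT : B⁻¹ᵀ = -B⁻¹ := by
        rw [Matrix.transpose_nonsing_inv, hB]
        have : (-B⁻¹) * (-B) = 1 := by
          rw [Matrix.neg_mul, Matrix.mul_neg, neg_neg, Matrix.nonsing_inv_mul B hInv]
        exact Matrix.inv_eq_left_inv this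
      calc Sᵀ = (-(B⁻¹ * Xᵀ))ᵀ := by rw [← h1]
        _ = -(Xᵀᵀ * B⁻¹ᵀ) := by rw [transpose_neg, transpose_mul]
        _ = X * B⁻¹ := by rw [transpose_transpose, hBiT, Matrix.mul_neg, neg_neg]
        _ = S := rfl
    have hSsym' : ∀ i j, S i j = S j i := by
      intro i j
      have := congrFun (congrFun hSsym j) i
      simpa [transpose_apply] using this
    have hg : ∀ r : Fin N → ℤ,
        vecMulVec (fun i => (r i : ℂ)) (B *ᵥ (fun i => (r i : ℂ))) ∈ V :=
      fun r => Submodule.subset_span ⟨r, rfl⟩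
    set h : Fin N → Fin N → Matrix (Fin N) (Fin N) ℂ := fun i j =>
      vecMulVec (Pi.single i 1) (B *ᵥ Pi.single j 1)
        + vecMulVec (Pi.single j 1) (B *ᵥ Pi.single i 1) with hhdef
    have hcast : ∀ i : Fin N, (fun k => (((Pi.single i 1 : Fin N → ℤ) k : ℤ) : ℂ))
        = (Pi.single i 1 : Fin N → ℂ) := by
      intro i; funext k
      by_cases hk : k = i
      · subst hk; simp
      · simp [Pi.single_apply, hk]
    have hcast2 : ∀ i j : Fin N,
        (fun k => ((((Pi.single i 1 + Pi.single j 1) : Fin N → ℤ) k : ℤ) : ℂ))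
        = (Pi.single i 1 + Pi.single j 1 : Fin N → ℂ) := by
      intro i j; funext k
      simp only [Pi.add_apply, Int.cast_add]
      rw [show ((Pi.single i 1 : Fin N → ℤ) k : ℂ) = (Pi.single i 1 : Fin N → ℂ) k from
          congrFun (hcast i) k,
        show ((Pi.single j 1 : Fin N → ℤ) k : ℂ) = (Pi.single j 1 : Fin N → ℂ) k from
          congrFun (hcast j) k]
    have hmem : ∀ i j, h i j ∈ V := by
      intro i j
      have h1 := hg (Pi.single i 1)
      have h2 := hg (Pi.single j 1)
      have h3 := hg (Pi.single i 1 + Pi.single j 1)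
      rw [hcast] at h1 h2
      rw [hcast2] at h3
      have hexp : vecMulVec (Pi.single i 1 + Pi.single j 1 : Fin N → ℂ)
          (B *ᵥ (Pi.single i 1 + Pi.single j 1 : Fin N → ℂ))
          = vecMulVec (Pi.single i 1 : Fin N → ℂ) (B *ᵥ Pi.single i 1)
            + vecMulVec (Pi.single j 1 : Fin N → ℂ) (B *ᵥ Pi.single j 1) + h i j := by
        ext k l
        simp only [hhdef, Matrix.add_apply, vecMulVec_apply, Matrix.mulVec_add, Pi.add_apply]
        ring
      have h4 := Submodule.sub_mem V h3 (Submodule.add_mem V h1 h2)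
      rw [hexp, add_sub_cancel_left] at h4
      exact h4
    -- rewrite each h i j via standard basis matrices
    have hvv : ∀ i j : Fin N,
        vecMulVec (Pi.single i 1 : Fin N → ℂ) (B *ᵥ (Pi.single j 1 : Fin N → ℂ))
          = Matrix.single i j (1 : ℂ) * Bᵀ := by
      intro i j
      ext k l
      simp only [vecMulVec_apply, mulVec_single, mul_one, mul_apply, Matrix.single, of_apply,
        ite_mul, one_mul, zero_mul, transpose_apply]
      rw [Finset.sum_eq_single j]
      · by_cases hik : i = k <;> simp [hik, Pi.single_apply, eq_comm]
      · intro b _ hb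
        simp [Ne.symm hb]
      · simp
    have hsum : ∑ i, ∑ j, S i j • h i j = (2 : ℂ) • (S * Bᵀ) := by
      calc ∑ i, ∑ j, S i j • h i j
          = ∑ i, ∑ j, (Matrix.single i j (S i j) * Bᵀ + Matrix.single j i (S j i) * Bᵀ) := by
            refine Finset.sum_congr rfl fun i _ => Finset.sum_congr rfl fun j _ => ?_
            rw [hhdef]
            simp only []
            rw [hvv i j, hvv j i, smul_add, ← Matrix.smul_mul, ← Matrix.smul_mul,
              smul_single, smul_single, smul_eq_mul, mul_one, hSsym' i j]
        _ = (∑ i, ∑ j, Matrix.single i j (S i j)) * Bᵀ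
            + (∑ i, ∑ j, Matrix.single j i (S j i)) * Bᵀ := by
            simp only [Finset.sum_add_distrib, Finset.sum_mul]
        _ = S * Bᵀ + S * Bᵀ := by
            rw [← matrix_eq_sum_single S, Finset.sum_comm,
              ← matrix_eq_sum_single S]
        _ = (2 : ℂ) • (S * Bᵀ) := by rw [two_smul]
    have hrep : X = (-(1/2) : ℂ) • ∑ i, ∑ j, S i j • h i j := by
      rw [hsum, hB, Matrix.mul_neg, hSB]
      norm_num [smul_neg, smul_smul]
    rw [hrep]
    exact Submodule.smul_mem V _ (Submodule.sum_mem V fun i _ =>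
      Submodule.sum_mem V fun j _ => Submodule.smul_mem V _ (hmem i j))
end

section
/- Let B be an N×N complex skew-symmetric matrix. Define on the free C-vector space T with basis {T(r) : r ∈ Z^N} the bracket [T(r), T(s)] = (Br|s)(T(r+s) - T(r) - T(s)). This bracket is antisymmetric and satisfies the Jacobi identity, so T is a Lie algebra. -/
open Matrix

/-- The bilinear form `(Br | s)`. -/
noncomputable def dotB {N : ℕ} (B : Matrix (Fin N) (Fin N) ℂ)
    (r s : Fin N → ℤ) : ℂ :=
  (B *ᵥ (fun i => (r i : ℂ))) ⬝ᵥ (fun i => (s i : ℂ))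

/-- The basis element `T(r)` of the free vector space on `ℤ^N`. -/
noncomputable def Tbasis {N : ℕ} (r : Fin N → ℤ) : (Fin N → ℤ) →₀ ℂ :=
  Finsupp.single r 1

/-- The bracket on basis elements:
`[T(r), T(s)] = (Br|s)(T(r+s) - T(r) - T(s))`. -/
noncomputable def brBasis {N : ℕ} (B : Matrix (Fin N) (Fin N) ℂ)
    (r s : Fin N → ℤ) : (Fin N → ℤ) →₀ ℂ :=
  dotB B r s • (Tbasis (r + s) - Tbasis r - Tbasis s)

/-- The bilinear extension of the bracket to the free vector space. -/
noncomputable def brExt {N : ℕ} (B : Matrix (Fin N) (Fin N) ℂ)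
    (x y : (Fin N → ℤ) →₀ ℂ) : (Fin N → ℤ) →₀ ℂ :=
  x.sum fun r c => y.sum fun s d => (c * d) • brBasis B r s

section Aux

lemma dotB_add_right {N : ℕ} (B : Matrix (Fin N) (Fin N) ℂ) (r s t : Fin N → ℤ) :
    dotB B r (s + t) = dotB B r s + dotB B r t := by
  simp [dotB, dotProduct, Pi.add_apply, Int.cast_add, mul_add, Finset.sum_add_distrib]

lemma dotB_add_left {N : ℕ} (B : Matrix (Fin N) (Fin N) ℂ) (r s t : Fin N → ℤ) :
    dotB B (r + s) t = dotB B r t + dotB B s t := by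
  simp [dotB, mulVec, dotProduct, Pi.add_apply, Int.cast_add, mul_add, add_mul,
    Finset.sum_add_distrib]

lemma dotB_skew {N : ℕ} {B : Matrix (Fin N) (Fin N) ℂ} (hB : Bᵀ = -B)
    (r s : Fin N → ℤ) : dotB B r s = - dotB B s r := by
  have h : ∀ i j, B i j = - B j i := by
    intro i j
    have := congrFun (congrFun hB j) i
    simpa [Matrix.transpose_apply] using this
  simp only [dotB, mulVec, dotProduct, Finset.sum_mul, ← Finset.sum_neg_distrib]
  rw [Finset.sum_comm]
  refine Finset.sum_congr rfl fun i _ => Finset.sum_congr rfl fun j _ => ?_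
  rw [h j i]; ring

variable {N : ℕ} (B : Matrix (Fin N) (Fin N) ℂ)

lemma brExt_zero_left (y : (Fin N → ℤ) →₀ ℂ) : brExt B 0 y = 0 := by
  simp [brExt]

lemma brExt_zero_right (x : (Fin N → ℤ) →₀ ℂ) : brExt B x 0 = 0 := by
  simp [brExt]

lemma brExt_add_left (x x' y : (Fin N → ℤ) →₀ ℂ) :
    brExt B (x + x') y = brExt B x y + brExt B x' y := by
  unfold brExt
  rw [Finsupp.sum_add_index]
  · intro r _; simp
  · intro r _ c c'; simp [add_mul, add_smul, Finsupp.sum_add]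

lemma brExt_add_right (x y y' : (Fin N → ℤ) →₀ ℂ) :
    brExt B x (y + y') = brExt B x y + brExt B x y' := by
  unfold brExt
  rw [← Finsupp.sum_add]
  refine Finsupp.sum_congr fun r _ => ?_
  rw [Finsupp.sum_add_index]
  · intro s _; simp
  · intro s _ d d'; simp [mul_add, add_smul]

lemma brExt_smul_left (a : ℂ) (x y : (Fin N → ℤ) →₀ ℂ) :
    brExt B (a • x) y = a • brExt B x y := by
  unfold brExt
  rw [Finsupp.sum_smul_index, Finsupp.smul_sum]
  · refine Finsupp.sum_congr fun r c => ?_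
    rw [Finsupp.smul_sum]
    refine Finsupp.sum_congr fun s d => ?_
    rw [smul_smul]
    congr 1; ring
  · intro r; simp

lemma brExt_smul_right (a : ℂ) (x y : (Fin N → ℤ) →₀ ℂ) :
    brExt B x (a • y) = a • brExt B x y := by
  unfold brExt
  rw [Finsupp.smul_sum]
  refine Finsupp.sum_congr fun r c => ?_
  rw [Finsupp.sum_smul_index, Finsupp.smul_sum]
  · refine Finsupp.sum_congr fun s d => ?_
    rw [smul_smul]
    congr 1; ring
  · intro s; simp

lemma brExt_single_single (r s : Fin N → ℤ) (c d : ℂ) :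
    brExt B (Finsupp.single r c) (Finsupp.single s d) = (c * d) • brBasis B r s := by
  unfold brExt
  rw [Finsupp.sum_single_index, Finsupp.sum_single_index]
  · simp
  · rw [Finsupp.sum_single_index] <;> simp

lemma brExt_sub_right (x y y' : (Fin N → ℤ) →₀ ℂ) :
    brExt B x (y - y') = brExt B x y - brExt B x y' := by
  have h := brExt_add_right B x (y - y') y'
  rw [sub_add_cancel] at h
  rw [h]; abel

lemma brBasis_skew (hB : Bᵀ = -B) (r s : Fin N → ℤ) :
    brBasis B r s = - brBasis B s r := by
  rw [brBasis, brBasis, dotB_skew hB, add_comm s r]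
  module

lemma brExt_single_brBasis (r s t : Fin N → ℤ) (c : ℂ) :
    brExt B (Finsupp.single r c) (brBasis B s t)
      = (c * dotB B s t) • (brBasis B r (s + t) - brBasis B r s - brBasis B r t) := by
  rw [brBasis, brExt_smul_right, Tbasis, Tbasis, Tbasis,
    brExt_sub_right, brExt_sub_right, brExt_single_single, brExt_single_single,
    brExt_single_single]
  module

lemma jacobi_single (hB : Bᵀ = -B) (r s t : Fin N → ℤ) (c d e : ℂ) :
    brExt B (Finsupp.single r c) (brExt B (Finsupp.single s d) (Finsupp.single t e))
      + brExt B (Finsupp.single s d) (brExt B (Finsupp.single t e) (Finsupp.single r c))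
      + brExt B (Finsupp.single t e) (brExt B (Finsupp.single r c) (Finsupp.single s d))
      = 0 := by
  rw [brExt_single_single B s t, brExt_single_single B t r, brExt_single_single B r s,
    brExt_smul_right, brExt_smul_right, brExt_smul_right,
    brExt_single_brBasis, brExt_single_brBasis, brExt_single_brBasis]
  have p1 : s + (t + r) = r + (s + t) := by ring
  have p2 : t + (r + s) = r + (s + t) := by ring
  have p3 : t + r = r + t := by ring
  have p4 : s + r = r + s := by ring
  have p5 : t + s = s + t := by ring
  have p6 : s + (r + t) = r + (s + t) := by ring
  simp only [brBasis, p1, p2, p3, p4, p5, p6]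
  rw [dotB_add_right B r s t, dotB_add_right B s r t, dotB_add_right B t r s,
    dotB_skew hB r t, dotB_skew hB s r, dotB_skew hB t s]
  set α := dotB B r s
  set β := dotB B s t
  set γ := dotB B t r
  module

end Aux

theorem bracket_antisymm_and_jacobi (N : ℕ) (B : Matrix (Fin N) (Fin N) ℂ)
    (hB : Bᵀ = -B) :
    (∀ x y : (Fin N → ℤ) →₀ ℂ, brExt B x y = -brExt B y x) ∧
    (∀ x y z : (Fin N → ℤ) →₀ ℂ,
      brExt B x (brExt B y z) + brExt B y (brExt B z x)
        + brExt B z (brExt B x y) = 0) := by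
  constructor
  · intro x y
    induction x using Finsupp.induction_linear with
    | zero => simp [brExt_zero_left, brExt_zero_right]
    | add f g hf hg =>
      rw [brExt_add_left, brExt_add_right, hf, hg]; abel
    | single r c =>
      induction y using Finsupp.induction_linear with
      | zero => simp [brExt_zero_left, brExt_zero_right]
      | add f g hf hg =>
        rw [brExt_add_left, brExt_add_right, hf, hg]; abel
      | single s d =>
        rw [brExt_single_single, brExt_single_single, brBasis_skew B hB]
        module
  · intro x y z
    induction x using Finsupp.induction_linear with
    | zero => simp [brExt_zero_left, brExt_zero_right]
    | add f g hf hg =>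
      rw [brExt_add_left, brExt_add_right, brExt_add_right, brExt_add_left,
        brExt_add_right]
      have h := congrArg₂ (· + ·) hf hg
      simp only [add_zero] at h
      rw [← h]; abel
    | single r c =>
      induction y using Finsupp.induction_linear with
      | zero => simp [brExt_zero_left, brExt_zero_right]
      | add f g hf hg =>
        rw [brExt_add_left, brExt_add_right, brExt_add_right, brExt_add_left,
          brExt_add_right]
        have h := congrArg₂ (· + ·) hf hg
        simp only [add_zero] at h
        rw [← h]; abel
      | single s d =>
        induction z using Finsupp.induction_linear with
        | zero => simp [brExt_zero_left, brExt_zero_right]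
        | add f g hf hg =>
          rw [brExt_add_left, brExt_add_right, brExt_add_right, brExt_add_left,
            brExt_add_right]
          have h := congrArg₂ (· + ·) hf hg
          simp only [add_zero] at h
          rw [← h]; abel
        | single t e => exact jacobi_single B hB r s t c d e
end

section
/- In the Lie algebra T with bracket [T(r),T(s)] = (Br|s)(T(r+s) - T(r) - T(s)), the map ψ_B : T(r) ↦ r(Br)^T is a Lie algebra homomorphism into gl_N(C), i.e., [r(Br)^T, s(Bs)^T] = (Br|s)((r+s)(B(r+s))^T - r(Br)^T - s(Bs)^T). -/
open Matrix

lemma vecMulVec_mul_vecMulVec {n : ℕ} (a b c d : Fin n → ℂ) :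
    vecMulVec a b * vecMulVec c d = (b ⬝ᵥ c) • vecMulVec a d := by
  ext i j
  simp only [mul_apply, vecMulVec_apply, Matrix.smul_apply, dotProduct, smul_eq_mul,
    Finset.sum_mul]
  apply Finset.sum_congr rfl
  intro k _
  ring

theorem psiB_is_hom (N : ℕ) (B : Matrix (Fin N) (Fin N) ℂ) (hB : Bᵀ = -B)
    (r s : Fin N → ℤ) :
    vecMulVec (fun i => (r i : ℂ)) (B *ᵥ (fun i => (r i : ℂ)))
        * vecMulVec (fun i => (s i : ℂ)) (B *ᵥ (fun i => (s i : ℂ)))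
      - vecMulVec (fun i => (s i : ℂ)) (B *ᵥ (fun i => (s i : ℂ)))
        * vecMulVec (fun i => (r i : ℂ)) (B *ᵥ (fun i => (r i : ℂ)))
    = ((B *ᵥ (fun i => (r i : ℂ))) ⬝ᵥ (fun i => (s i : ℂ))) •
        (vecMulVec (fun i => ((r + s) i : ℂ)) (B *ᵥ (fun i => ((r + s) i : ℂ)))
          - vecMulVec (fun i => (r i : ℂ)) (B *ᵥ (fun i => (r i : ℂ)))
          - vecMulVec (fun i => (s i : ℂ)) (B *ᵥ (fun i => (s i : ℂ)))) := by
  set r' : Fin N → ℂ := fun i => (r i : ℂ) with hr'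
  set s' : Fin N → ℂ := fun i => (s i : ℂ) with hs'
  have hsum : (fun i => ((r + s) i : ℂ)) = r' + s' := by
    funext i; simp [hr', hs']
  have hskew : (B *ᵥ s') ⬝ᵥ r' = -((B *ᵥ r') ⬝ᵥ s') := by
    rw [dotProduct_comm, dotProduct_mulVec, ← vecMul_transpose, hB]
    simp [Matrix.vecMul_neg, dotProduct_neg, neg_dotProduct, vecMul_transpose, ← dotProduct_mulVec, dotProduct_comm]
  have hself : ∀ v : Fin N → ℂ, (B *ᵥ v) ⬝ᵥ v = 0 := by
    intro v
    have h1 : (B *ᵥ v) ⬝ᵥ v = -((B *ᵥ v) ⬝ᵥ v) := by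
      nth_rewrite 1 [dotProduct_comm, dotProduct_mulVec, ← vecMul_transpose, hB]
      simp [vecMul_neg, dotProduct_neg]
    have h2 : (B *ᵥ v) ⬝ᵥ v + (B *ᵥ v) ⬝ᵥ v = 0 := by linear_combination h1
    exact add_self_eq_zero.mp h2
  rw [hsum, _root_.vecMulVec_mul_vecMulVec, _root_.vecMulVec_mul_vecMulVec]
  rw [mulVec_add]
  have hexp : vecMulVec (r' + s') (B *ᵥ r' + B *ᵥ s')
      = vecMulVec r' (B *ᵥ r') + vecMulVec r' (B *ᵥ s')
        + vecMulVec s' (B *ᵥ r') + vecMulVec s' (B *ᵥ s') := by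
    ext i j
    simp [vecMulVec_apply]
    ring
  rw [hexp, hskew]
  module
end

section
/- Each I_q = span{T_q(s; r_1,…,r_q)} is an ideal of the Lie algebra T (with bracket [T(r),T(s)] = (Br|s)(T(r+s)-T(r)-T(s))), and moreover [I_p, I_q] ⊆ I_{p+q-2} whenever p+q ≥ 3. -/
open Matrix

/-- The element `T(r)` (with the convention `T(0) = 0`). -/
noncomputable def TT {N : ℕ} (r : Fin N → ℤ) : (Fin N → ℤ) →₀ ℂ :=
  Finsupp.single r 1 - Finsupp.single 0 1

/-- `T_q(s; r_1, …, r_q) = Σ_{I ⊆ {1,…,q}} (-1)^{|I|} T(s + Σ_{i∈I} r_i)`. -/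
noncomputable def Tq {N : ℕ} (q : ℕ) (s : Fin N → ℤ) (r : Fin q → (Fin N → ℤ)) :
    (Fin N → ℤ) →₀ ℂ :=
  ∑ I : Finset (Fin q), ((-1 : ℂ) ^ I.card) • TT (s + ∑ i ∈ I, r i)

/-- `I_q` is the span of all the `T_q` expressions. -/
noncomputable def Iq (N : ℕ) (q : ℕ) : Submodule ℂ ((Fin N → ℤ) →₀ ℂ) :=
  Submodule.span ℂ
    {x | ∃ (s : Fin N → ℤ) (r : Fin q → (Fin N → ℤ)), x = Tq q s r}

/-- The bracket of `T(r)` with a general element, extended linearly. -/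
noncomputable def brT {N : ℕ} (B : Matrix (Fin N) (Fin N) ℂ)
    (r : Fin N → ℤ) (x : (Fin N → ℤ) →₀ ℂ) : (Fin N → ℤ) →₀ ℂ :=
  x.sum fun s c => c • (dotB B r s • (TT (r + s) - TT r - TT s))

/-- The bracket of two general elements, extended bilinearly. -/
noncomputable def brF {N : ℕ} (B : Matrix (Fin N) (Fin N) ℂ)
    (x y : (Fin N → ℤ) →₀ ℂ) : (Fin N → ℤ) →₀ ℂ :=
  x.sum fun r c => c • brT B r y

namespace IqAux

abbrev GA (N : ℕ) := AddMonoidAlgebra ℂ (Fin N → ℤ)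

noncomputable def Xs {N : ℕ} (s : Fin N → ℤ) : GA N := AddMonoidAlgebra.single s 1

theorem Xs_mul {N : ℕ} (s t : Fin N → ℤ) : Xs s * Xs t = Xs (s + t) := by
  simp [Xs, AddMonoidAlgebra.single_mul_single]

theorem Xs_zero {N : ℕ} : Xs (0 : Fin N → ℤ) = 1 := rfl

noncomputable def K (N m : ℕ) : Submodule ℂ (GA N) :=
  Submodule.span ℂ
    {x | ∃ (s : Fin N → ℤ) (r : Fin m → (Fin N → ℤ)), x = Xs s * ∏ i, (1 - Xs (r i))}

theorem gen_mem {N m : ℕ} (s : Fin N → ℤ) (r : Fin m → (Fin N → ℤ)) :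
    Xs s * ∏ i, (1 - Xs (r i)) ∈ K N m :=
  Submodule.subset_span ⟨s, r, rfl⟩

theorem K_zero {N : ℕ} (x : GA N) : x ∈ K N 0 := by
  have hx : x = x.coeff.sum fun s c => c • Xs s := by
    conv_lhs => rw [← AddMonoidAlgebra.sum_coeff_single x]
    refine Finsupp.sum_congr fun s _ => ?_
    rw [Xs, AddMonoidAlgebra.smul_single', mul_one]
  rw [hx]
  exact Submodule.sum_mem _ fun s _ => Submodule.smul_mem _ _ (by
    simpa using gen_mem s (Fin.elim0 : Fin 0 → (Fin N → ℤ)))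

theorem K_succ_le {N m : ℕ} : K N (m + 1) ≤ K N m := by
  rw [K, Submodule.span_le]
  rintro x ⟨s, r, rfl⟩
  have h : Xs s * ∏ i : Fin (m+1), (1 - Xs (r i)) =
      Xs s * ∏ i : Fin m, (1 - Xs (r i.succ))
      - Xs (s + r 0) * ∏ i : Fin m, (1 - Xs (r i.succ)) := by
    rw [Fin.prod_univ_succ, ← Xs_mul]
    ring
  rw [h]
  exact sub_mem (gen_mem _ _) (gen_mem _ _)

theorem K_mono {N : ℕ} {a b : ℕ} (h : a ≤ b) : K N b ≤ K N a := by
  induction b with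
  | zero =>
    have : a = 0 := by omega
    subst this; exact le_rfl
  | succ n ih =>
    rcases Nat.eq_or_lt_of_le h with h1 | h2
    · exact le_of_eq (by rw [h1])
    · exact K_succ_le.trans (ih (by omega))

theorem mul_mem_K {N m : ℕ} {x : GA N} (hx : x ∈ K N m) (z : GA N) :
    z * x ∈ K N m := by
  induction hx using Submodule.span_induction with
  | mem y hy =>
    rcases hy with ⟨s, r, rfl⟩
    -- z * (Xs s * ∏ ...) : reduce z to sum of singles
    have hz : z = z.coeff.sum fun t c => c • Xs t := by
      conv_lhs => rw [← AddMonoidAlgebra.sum_coeff_single z]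
      refine Finsupp.sum_congr fun t _ => ?_
      rw [Xs, AddMonoidAlgebra.smul_single', mul_one]
    rw [hz, Finsupp.sum, Finset.sum_mul]
    refine Submodule.sum_mem _ fun t _ => ?_
    rw [smul_mul_assoc, ← mul_assoc, Xs_mul]
    exact Submodule.smul_mem _ _ (gen_mem _ _)
  | zero => rw [mul_zero]; exact Submodule.zero_mem _
  | add a b _ _ ha hb => rw [mul_add]; exact add_mem ha hb
  | smul c a _ ha => rw [mul_smul_comm]; exact Submodule.smul_mem _ _ ha

theorem K_mul {N a b : ℕ} {x y : GA N} (hx : x ∈ K N a) (hy : y ∈ K N b) :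
    x * y ∈ K N (a + b) := by
  induction hx using Submodule.span_induction with
  | mem u hu =>
    rcases hu with ⟨s, r, rfl⟩
    induction hy using Submodule.span_induction with
    | mem v hv =>
      rcases hv with ⟨t, w, rfl⟩
      have key : (Xs s * ∏ i : Fin a, (1 - Xs (r i))) * (Xs t * ∏ i : Fin b, (1 - Xs (w i)))
          = Xs (s + t) * ∏ i : Fin (a + b), (1 - Xs (Fin.append r w i)) := by
        rw [Fin.prod_univ_add]
        simp only [Fin.append_left, Fin.append_right]
        rw [← Xs_mul]
        ring
      rw [key]
      exact gen_mem _ _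
    | zero => rw [mul_zero]; exact Submodule.zero_mem _
    | add u v _ _ hu hv => rw [mul_add]; exact add_mem hu hv
    | smul c u _ hu => rw [mul_smul_comm]; exact Submodule.smul_mem _ _ hu
  | zero => rw [zero_mul]; exact Submodule.zero_mem _
  | add u v _ _ hu hv => rw [add_mul]; exact add_mem hu hv
  | smul c u _ hu => rw [smul_mul_assoc]; exact Submodule.smul_mem _ _ hu

theorem TT_eq {N : ℕ} (r : Fin N → ℤ) : (AddMonoidAlgebra.ofCoeff (TT r) : GA N) = Xs r - (1 : GA N) := rfl

theorem Xs_sum {N : ℕ} {ι : Type*} (t : Finset ι) (f : ι → (Fin N → ℤ)) :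
    ∏ i ∈ t, Xs (f i) = Xs (∑ i ∈ t, f i) := by
  classical
  induction t using Finset.cons_induction with
  | empty => simp [Xs_zero]
  | cons a t ha ih => rw [Finset.prod_cons, Finset.sum_cons, ih, Xs_mul]

theorem prod_one_sub {N q : ℕ} (r : Fin q → (Fin N → ℤ)) :
    ∏ i : Fin q, (1 - Xs (r i)) =
      ∑ I : Finset (Fin q), ((-1 : ℂ) ^ I.card) • Xs (∑ i ∈ I, r i) := by
  have h1 : ∀ i ∈ (Finset.univ : Finset (Fin q)), (1 - Xs (r i)) = -Xs (r i) + 1 := by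
    intro i _; ring
  rw [Finset.prod_congr rfl h1, Finset.prod_add, Finset.powerset_univ]
  refine Finset.sum_congr rfl fun I _ => ?_
  rw [Finset.prod_const_one, mul_one]
  have h2 : ∀ i ∈ I, -Xs (r i) = (-1 : GA N) * Xs (r i) := by intro i _; ring
  rw [Finset.prod_congr rfl h2, Finset.prod_mul_distrib, Finset.prod_const, Xs_sum]
  have h3 : (-1 : GA N) = (-1 : ℂ) • 1 := by simp
  rw [h3, smul_pow, one_pow, smul_mul_assoc, one_mul]

theorem Tq_eq {N q : ℕ} (hq : 1 ≤ q) (s : Fin N → ℤ) (r : Fin q → (Fin N → ℤ)) :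
    (AddMonoidAlgebra.ofCoeff (Tq q s r) : GA N) = Xs s * ∏ i, (1 - Xs (r i)) := by
  haveI : Nonempty (Fin q) := ⟨⟨0, hq⟩⟩
  have hz : ∑ I : Finset (Fin q), ((-1 : ℂ)) ^ I.card = 0 := by
    have h := Finset.sum_powerset_neg_one_pow_card_of_nonempty
      (Finset.univ_nonempty (α := Fin q))
    rw [Finset.powerset_univ] at h
    exact_mod_cast congrArg (Int.cast : ℤ → ℂ) h
  rw [prod_one_sub, Finset.mul_sum, Tq, AddMonoidAlgebra.ofCoeff_sum]
  simp only [AddMonoidAlgebra.ofCoeff_smul, TT_eq, smul_sub]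
  rw [Finset.sum_sub_distrib, ← Finset.sum_smul, hz, zero_smul, sub_zero]
  refine Finset.sum_congr rfl fun I _ => ?_
  rw [mul_smul_comm, Xs_mul]

theorem TT_mem_K1 {N : ℕ} (s : Fin N → ℤ) : (AddMonoidAlgebra.ofCoeff (TT s) : GA N) ∈ K N 1 := by
  have h : (AddMonoidAlgebra.ofCoeff (TT s) : GA N) = (-1 : ℂ) • (Xs 0 * ∏ i : Fin 1, (1 - Xs (![s] i))) := by
    rw [TT_eq, Fin.prod_univ_one, Xs_zero, one_mul]
    simp
  rw [h]
  exact Submodule.smul_mem _ _ (gen_mem _ _)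

theorem Tq_zero_eq {N : ℕ} (s : Fin N → ℤ) (r : Fin 0 → (Fin N → ℤ)) :
    Tq 0 s r = TT s := by
  rw [Tq, Finset.univ_unique, Finset.sum_singleton]
  have hd : (default : Finset (Fin 0)) = ∅ := Finset.eq_empty_of_isEmpty _
  rw [hd]
  simp

theorem Iq_le_K {N p : ℕ} {x : (Fin N → ℤ) →₀ ℂ} (hx : x ∈ Iq N p) :
    (AddMonoidAlgebra.ofCoeff x : GA N) ∈ K N (max p 1) := by
  have H : Iq N p ≤ (K N (max p 1)).comap (AddMonoidAlgebra.coeffLinearEquiv ℂ).symm.toLinearMap := by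
    rw [Iq, Submodule.span_le]
    rintro x ⟨s, r, rfl⟩
    show (AddMonoidAlgebra.ofCoeff (Tq p s r) : GA N) ∈ K N (max p 1)
    rcases Nat.eq_zero_or_pos p with h0 | h1
    · subst h0
      rw [Tq_zero_eq]
      exact TT_mem_K1 s
    · have : max p 1 = p := by omega
      rw [this, Tq_eq h1]
      exact gen_mem _ _
  exact H hx

theorem K_le_Iq {N q : ℕ} (hq : 1 ≤ q) {x : (Fin N → ℤ) →₀ ℂ} (hx : (AddMonoidAlgebra.ofCoeff x : GA N) ∈ K N q) :
    x ∈ Iq N q := by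
  have H : K N q ≤ (Iq N q).comap (AddMonoidAlgebra.coeffLinearEquiv ℂ).toLinearMap := by
    rw [K, Submodule.span_le]
    rintro x ⟨s, r, rfl⟩
    show (Xs s * ∏ i, (1 - Xs (r i))).coeff ∈ Iq N q
    rw [← Tq_eq hq]
    exact Submodule.subset_span ⟨s, r, rfl⟩
  exact H hx

theorem one_sub_mem {N : ℕ} (t : Fin N → ℤ) : (1 - Xs t) ∈ K N 1 := by
  have h : (1 : GA N) - Xs t = Xs 0 * ∏ i : Fin 1, (1 - Xs (![t] i)) := by
    rw [Fin.prod_univ_one, Xs_zero, one_mul]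
    simp
  rw [h]
  exact gen_mem _ _

/-- The derivation `D_j` with `D_j X^r = r_j X^r`. -/
noncomputable def Dop {N : ℕ} (j : Fin N) (x : GA N) : GA N :=
  x.coeff.sum fun r c => AddMonoidAlgebra.single r (c * ((r j : ℤ) : ℂ))

theorem Dop_single {N : ℕ} (j : Fin N) (r : Fin N → ℤ) (c : ℂ) :
    Dop j (AddMonoidAlgebra.single r c) = AddMonoidAlgebra.single r (c * ((r j : ℤ) : ℂ)) := by
  rw [Dop, AddMonoidAlgebra.coeff_single, Finsupp.sum_single_index]
  simp

theorem Dop_zero {N : ℕ} (j : Fin N) : Dop j (0 : GA N) = 0 := by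
  rw [Dop, AddMonoidAlgebra.coeff_zero, Finsupp.sum_zero_index]

theorem Dop_add {N : ℕ} (j : Fin N) (x y : GA N) :
    Dop j (x + y) = Dop j x + Dop j y := by
  rw [Dop, Dop, Dop, AddMonoidAlgebra.coeff_add]
  exact Finsupp.sum_add_index' (fun r => by simp) (fun r c d => by rw [add_mul, AddMonoidAlgebra.single_add])

theorem Dop_smul {N : ℕ} (j : Fin N) (c : ℂ) (x : GA N) :
    Dop j (c • x) = c • Dop j x := by
  rw [Dop, Dop, AddMonoidAlgebra.coeff_smul, Finsupp.sum_smul_index (fun r => by simp), Finsupp.smul_sum]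
  refine Finsupp.sum_congr fun r _ => ?_
  rw [AddMonoidAlgebra.smul_single', mul_assoc]

theorem Dop_mul {N : ℕ} (j : Fin N) (x y : GA N) :
    Dop j (x * y) = Dop j x * y + x * Dop j y := by
  induction x using AddMonoidAlgebra.induction_linear with
  | zero => simp [Dop_zero]
  | add f g hf hg =>
    rw [add_mul, Dop_add, hf, hg, Dop_add, add_mul, add_mul]
    abel
  | single a b =>
    induction y using AddMonoidAlgebra.induction_linear with
    | zero => simp [Dop_zero]
    | add f g hf hg =>
      rw [mul_add, Dop_add, hf, hg, Dop_add, mul_add, mul_add]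
      abel
    | single c d =>
      show Dop j (AddMonoidAlgebra.single a b * AddMonoidAlgebra.single c d) = _
      rw [AddMonoidAlgebra.single_mul_single, Dop_single, Dop_single, Dop_single]
      show _ = (AddMonoidAlgebra.single a (b * ((a j : ℤ) : ℂ)) * AddMonoidAlgebra.single c d)
        + (AddMonoidAlgebra.single a b * AddMonoidAlgebra.single c (d * ((c j : ℤ) : ℂ)))
      rw [AddMonoidAlgebra.single_mul_single, AddMonoidAlgebra.single_mul_single,
        ← AddMonoidAlgebra.single_add]
      congr 1
      have : (a + c) j = a j + c j := rfl
      rw [this]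
      push_cast
      ring

theorem Dop_Xs {N : ℕ} (j : Fin N) (t : Fin N → ℤ) :
    Dop j (Xs t) = ((t j : ℤ) : ℂ) • Xs t := by
  rw [Xs, Dop_single, AddMonoidAlgebra.smul_single', mul_one, one_mul]

/-- The augmentation map. -/
noncomputable def eps (N : ℕ) : GA N →ₐ[ℂ] ℂ :=
  AddMonoidAlgebra.lift ℂ ℂ (Fin N → ℤ) 1

theorem eps_single {N : ℕ} (r : Fin N → ℤ) (c : ℂ) :
    eps N (AddMonoidAlgebra.single r c) = c := by
  show eps N (AddMonoidAlgebra.single r c) = c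
  rw [eps, AddMonoidAlgebra.lift_single]
  simp

theorem eps_Xs {N : ℕ} (s : Fin N → ℤ) : eps N (Xs s) = 1 := eps_single s 1

theorem eps_K1 {N : ℕ} {x : GA N} (hx : x ∈ K N 1) : eps N x = 0 := by
  induction hx using Submodule.span_induction with
  | mem y hy =>
    rcases hy with ⟨s, r, rfl⟩
    rw [Fin.prod_univ_one, _root_.map_mul, _root_.map_sub, _root_.map_one, eps_Xs, eps_Xs, sub_self, mul_zero]
  | zero => exact map_zero _
  | add a b _ _ ha hb => rw [map_add, ha, hb, add_zero]
  | smul c a _ ha => rw [_root_.map_smul, ha, smul_zero]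

theorem eps_K {N m : ℕ} (hm : 1 ≤ m) {x : GA N} (hx : x ∈ K N m) : eps N x = 0 :=
  eps_K1 (K_mono hm hx)

theorem Dop_mem {N : ℕ} (j : Fin N) (m : ℕ) :
    ∀ x ∈ K N (m + 1), Dop j x ∈ K N m := by
  induction m with
  | zero => exact fun x _ => K_zero _
  | succ n ih =>
    intro x hx
    induction hx using Submodule.span_induction with
    | mem y hy =>
      rcases hy with ⟨s, r, rfl⟩
      have hsplit : Xs s * ∏ i : Fin (n + 2), (1 - Xs (r i)) =
          (1 - Xs (r 0)) * (Xs s * ∏ i : Fin (n + 1), (1 - Xs (r i.succ))) := by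
        rw [Fin.prod_univ_succ]; ring
      have hgen' : Xs s * ∏ i : Fin (n + 1), (1 - Xs (r i.succ)) ∈ K N (n + 1) := gen_mem _ _
      rw [hsplit, Dop_mul]
      refine add_mem ?_ ?_
      · exact mul_mem_K hgen' _
      · have h1 := K_mul (one_sub_mem (r 0)) (ih _ hgen')
        rwa [Nat.add_comm] at h1
    | zero => rw [Dop_zero]; exact Submodule.zero_mem _
    | add a b _ _ ha hb => rw [Dop_add]; exact add_mem ha hb
    | smul c a _ ha => rw [Dop_smul]; exact Submodule.smul_mem _ _ ha

/-- `M_j x = Σ_s x_s s_j (X^s - 1)`. -/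
noncomputable def Mop {N : ℕ} (j : Fin N) (x : GA N) : GA N :=
  x.coeff.sum fun s c => (c * ((s j : ℤ) : ℂ)) • (Xs s - 1)

theorem Mop_mem_K1 {N : ℕ} (j : Fin N) (x : GA N) : Mop j x ∈ K N 1 := by
  refine Submodule.sum_mem _ fun s _ => Submodule.smul_mem _ _ ?_
  have h : Xs s - (1 : GA N) = (-1 : ℂ) • (1 - Xs s) := by simp
  rw [h]
  exact Submodule.smul_mem _ _ (one_sub_mem s)

theorem Mop_eq {N : ℕ} (j : Fin N) (x : GA N) :
    Mop j x = Dop j x - eps N (Dop j x) • 1 := by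
  have h1 : eps N (Dop j x) = x.coeff.sum fun s c => c * ((s j : ℤ) : ℂ) := by
    rw [Dop, map_finsuppSum]
    exact Finsupp.sum_congr fun s _ => eps_single _ _
  rw [h1, Mop, Dop]
  rw [Finsupp.sum, Finsupp.sum, Finsupp.sum, Finset.sum_smul, ← Finset.sum_sub_distrib]
  refine Finset.sum_congr rfl fun s _ => ?_
  rw [smul_sub, Xs, AddMonoidAlgebra.smul_single', mul_one]

theorem Mop_mem {N m : ℕ} (j : Fin N) {x : GA N} (hx : x ∈ K N m) :
    Mop j x ∈ K N (max (m - 1) 1) := by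
  match m with
  | 0 => exact Mop_mem_K1 j x
  | 1 => exact Mop_mem_K1 j x
  | (n + 2) =>
    have hD : Dop j x ∈ K N (n + 1) := Dop_mem j (n + 1) x hx
    have he : eps N (Dop j x) = 0 := eps_K (by omega) hD
    rw [Mop_eq, he, zero_smul, sub_zero]
    have : max (n + 2 - 1) 1 = n + 1 := by omega
    rw [this]
    exact hD


theorem TT_comb {N : ℕ} (r s : Fin N → ℤ) :
    (Xs r - 1) * (Xs s - 1) = (AddMonoidAlgebra.ofCoeff (TT (r + s) - TT r - TT s) : GA N) := by
  simp only [AddMonoidAlgebra.ofCoeff_sub, TT_eq]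
  rw [← Xs_mul]
  ring

theorem brT_eq {N : ℕ} (B : Matrix (Fin N) (Fin N) ℂ) (r : Fin N → ℤ) (y : (Fin N → ℤ) →₀ ℂ) :
    (AddMonoidAlgebra.ofCoeff (brT B r y) : GA N) = ∑ k : Fin N,
      (B *ᵥ fun i => ((r i : ℤ) : ℂ)) k • ((Xs r - 1) * Mop k (AddMonoidAlgebra.ofCoeff y)) := by
  rw [brT, Finsupp.sum, AddMonoidAlgebra.ofCoeff_sum]
  have key : ∀ s ∈ y.support, (AddMonoidAlgebra.ofCoeff (y s • (dotB B r s • (TT (r + s) - TT r - TT s))) : GA N)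
      = ∑ k : Fin N, (B *ᵥ fun i => ((r i : ℤ) : ℂ)) k •
          ((Xs r - 1) * ((y s * ((s k : ℤ) : ℂ)) • (Xs s - 1))) := by
    intro s _
    rw [AddMonoidAlgebra.ofCoeff_smul, AddMonoidAlgebra.ofCoeff_smul, ← TT_comb, dotB]
    have hdp : (B *ᵥ fun i => ((r i : ℤ) : ℂ)) ⬝ᵥ (fun i => ((s i : ℤ) : ℂ))
        = ∑ k, (B *ᵥ fun i => ((r i : ℤ) : ℂ)) k * ((s k : ℤ) : ℂ) := rfl
    rw [hdp, Finset.sum_smul, Finset.smul_sum]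
    refine Finset.sum_congr rfl fun k _ => ?_
    rw [mul_smul_comm, smul_smul, smul_smul]
    congr 1
    ring
  rw [Finset.sum_congr rfl key, Finset.sum_comm]
  refine Finset.sum_congr rfl fun k _ => ?_
  rw [Mop, Finsupp.sum, Finset.mul_sum, Finset.smul_sum]

theorem brF_eq {N : ℕ} (B : Matrix (Fin N) (Fin N) ℂ) (x y : (Fin N → ℤ) →₀ ℂ) :
    (AddMonoidAlgebra.ofCoeff (brF B x y) : GA N) = ∑ k : Fin N, ∑ j : Fin N, B k j • (Mop j (AddMonoidAlgebra.ofCoeff x) * Mop k (AddMonoidAlgebra.ofCoeff y)) := by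
  rw [brF, Finsupp.sum, AddMonoidAlgebra.ofCoeff_sum]
  have key : ∀ rr ∈ x.support, (AddMonoidAlgebra.ofCoeff (x rr • brT B rr y) : GA N)
      = ∑ k : Fin N, ∑ j : Fin N,
          B k j • ((x rr * ((rr j : ℤ) : ℂ)) • ((Xs rr - 1) * Mop k (AddMonoidAlgebra.ofCoeff y))) := by
    intro rr _
    rw [AddMonoidAlgebra.ofCoeff_smul, brT_eq, Finset.smul_sum]
    refine Finset.sum_congr rfl fun k _ => ?_
    have hmv : (B *ᵥ fun i => ((rr i : ℤ) : ℂ)) k = ∑ j, B k j * ((rr j : ℤ) : ℂ) := rfl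
    rw [smul_smul, hmv, Finset.mul_sum, Finset.sum_smul]
    refine Finset.sum_congr rfl fun j _ => ?_
    rw [smul_smul]
    congr 1
    ring
  rw [Finset.sum_congr rfl key, Finset.sum_comm]
  refine Finset.sum_congr rfl fun k _ => ?_
  rw [Finset.sum_comm]
  refine Finset.sum_congr rfl fun j _ => ?_
  conv_rhs => rw [Mop, Finsupp.sum, Finset.sum_mul]
  rw [Finset.smul_sum]
  refine Finset.sum_congr rfl fun rr _ => ?_
  rw [smul_mul_assoc]

theorem Xs_sub_one_mem {N : ℕ} (r : Fin N → ℤ) : (Xs r - 1) ∈ K N 1 := by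
  have h : Xs r - (1 : GA N) = -(1 - Xs r) := by ring
  rw [h]
  exact neg_mem (one_sub_mem r)

theorem main (N : ℕ) (B : Matrix (Fin N) (Fin N) ℂ) :
    (∀ q : ℕ, 1 ≤ q → ∀ (r : Fin N → ℤ), ∀ y ∈ Iq N q, brT B r y ∈ Iq N q) ∧
    (∀ p q : ℕ, 3 ≤ p + q →
      ∀ x ∈ Iq N p, ∀ y ∈ Iq N q, brF B x y ∈ Iq N (p + q - 2)) := by
  constructor
  · intro q hq r y hy
    have hyK : (AddMonoidAlgebra.ofCoeff y : GA N) ∈ K N (max q 1) := Iq_le_K hy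
    refine K_le_Iq hq ?_
    rw [brT_eq]
    refine Submodule.sum_mem _ fun k _ => Submodule.smul_mem _ _ ?_
    have h3 := K_mul (Xs_sub_one_mem r) (Mop_mem k hyK)
    exact K_mono (by omega : q ≤ 1 + max (max q 1 - 1) 1) h3
  · intro p q hpq x hx y hy
    have hxK : (AddMonoidAlgebra.ofCoeff x : GA N) ∈ K N (max p 1) := Iq_le_K hx
    have hyK : (AddMonoidAlgebra.ofCoeff y : GA N) ∈ K N (max q 1) := Iq_le_K hy
    refine K_le_Iq (by omega) ?_
    rw [brF_eq]
    refine Submodule.sum_mem _ fun k _ => Submodule.sum_mem _ fun j _ =>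
      Submodule.smul_mem _ _ ?_
    have h3 := K_mul (Mop_mem j hxK) (Mop_mem k hyK)
    refine K_mono ?_ h3
    omega

end IqAux

theorem Iq_ideal_and_bracket_degree (N : ℕ) (B : Matrix (Fin N) (Fin N) ℂ)
    (hB : Bᵀ = -B) :
    (∀ q : ℕ, 1 ≤ q → ∀ (r : Fin N → ℤ), ∀ y ∈ Iq N q, brT B r y ∈ Iq N q) ∧
    (∀ p q : ℕ, 3 ≤ p + q →
      ∀ x ∈ Iq N p, ∀ y ∈ Iq N q, brF B x y ∈ Iq N (p + q - 2)) := by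
  exact IqAux.main N B
end

section
/- Let A = C[t_1^{±1},…,t_N^{±1}] be the Laurent polynomial ring and J_q the ideal spanned by {t^r (1-t^{r_1})···(1-t^{r_q}) : r, r_1,…,r_q ∈ Z^N}. Then the intersection ∩_{q≥1} J_q = {0}. -/
/-- The monomial `t^r` in the Laurent polynomial ring
`ℂ[t_1^{±1}, …, t_N^{±1}]`, modelled as `AddMonoidAlgebra ℂ (Fin N → ℤ)`. -/
noncomputable def tpow {N : ℕ} (r : Fin N → ℤ) : AddMonoidAlgebra ℂ (Fin N → ℤ) :=
  AddMonoidAlgebra.single r 1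

/-- `J_q` is the span of all `t^r (1 - t^{r_1}) ⋯ (1 - t^{r_q})`. -/
noncomputable def Jq (N q : ℕ) : Submodule ℂ (AddMonoidAlgebra ℂ (Fin N → ℤ)) :=
  Submodule.span ℂ
    {x | ∃ (r : Fin N → ℤ) (rs : Fin q → (Fin N → ℤ)),
      x = tpow r * ∏ i : Fin q, (1 - tpow (rs i))}

/-- A function on `ℤ^N` is "killed by `q` differences". -/
def KilledBy {N : ℕ} : ℕ → ((Fin N → ℤ) → ℂ) → Prop
  | 0, P => P = 0
  | q+1, P => ∀ s, KilledBy q (fun x => P (x + s) - P x)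

lemma killed_congr {N : ℕ} {q : ℕ} {P Q : (Fin N → ℤ) → ℂ} (h : P = Q) :
    KilledBy q P → KilledBy q Q := by rw [h]; exact id

lemma killed_zero {N : ℕ} : ∀ q : ℕ, KilledBy q (fun _ : Fin N → ℤ => (0 : ℂ))
  | 0 => rfl
  | q+1 => fun s => killed_congr (by funext x; simp) (killed_zero q)

lemma killed_const {N : ℕ} (c : ℂ) : KilledBy 1 (fun _ : Fin N → ℤ => c) := by
  intro s
  exact (by funext x; simp : (fun _ : Fin N → ℤ => (0:ℂ)) = fun x => c - c) ▸ rfl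

lemma killed_add {N : ℕ} : ∀ (q : ℕ) (P Q : (Fin N → ℤ) → ℂ),
    KilledBy q P → KilledBy q Q → KilledBy q (fun x => P x + Q x)
  | 0, P, Q, hP, hQ => by
      simp only [KilledBy] at *
      funext x; simp [congrFun hP x, congrFun hQ x]
  | q+1, P, Q, hP, hQ => fun s =>
      killed_congr (by funext x; ring) (killed_add q _ _ (hP s) (hQ s))

lemma killed_mono {N : ℕ} : ∀ (q : ℕ) (P : (Fin N → ℤ) → ℂ),
    KilledBy q P → KilledBy (q+1) P
  | 0, P, hP => fun s => by
      simp only [KilledBy] at hP ⊢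
      funext x; simp [congrFun hP]
  | q+1, P, hP => fun s => killed_mono q _ (hP s)

lemma killed_shift {N : ℕ} : ∀ (q : ℕ) (P : (Fin N → ℤ) → ℂ) (r : Fin N → ℤ),
    KilledBy q P → KilledBy q (fun x => P (x + r))
  | 0, P, r, hP => by
      simp only [KilledBy] at hP ⊢
      funext x; simp [congrFun hP]
  | q+1, P, r, hP => fun s =>
      killed_congr (by funext x; rw [add_right_comm])
        (killed_shift q _ r (hP s))

lemma killed_mul {N : ℕ} : ∀ (n a b : ℕ), a + b ≤ n → ∀ (P Q : (Fin N → ℤ) → ℂ),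
    KilledBy (a+1) P → KilledBy (b+1) Q → KilledBy (a+b+1) (fun x => P x * Q x) := by
  intro n
  induction n with
  | zero =>
    intro a b hab P Q hP hQ
    obtain ⟨ha, hb⟩ : a = 0 ∧ b = 0 := by omega
    subst ha; subst hb
    intro s
    have hP0 := hP s; have hQ0 := hQ s
    simp only [KilledBy] at hP0 hQ0 ⊢
    funext x
    have h1 : P (x + s) = P x := by have := congrFun hP0 x; simpa [sub_eq_zero] using this
    have h2 : Q (x + s) = Q x := by have := congrFun hQ0 x; simpa [sub_eq_zero] using this
    simp [h1, h2]
  | succ n ih =>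
    intro a b hab P Q hP hQ
    intro s
    have key : (fun x => P (x + s) * Q (x + s) - P x * Q x)
        = fun x => ((P (x + s) - P x) * Q (x + s)) + (P x * (Q (x + s) - Q x)) := by
      funext x; ring
    rw [key]
    have term1 : KilledBy (a + b) (fun x => (P (x + s) - P x) * Q (x + s)) := by
      cases a with
      | zero =>
        have hP0 := hP s
        simp only [KilledBy] at hP0
        have hz : (fun x => (P (x+s) - P x) * Q (x+s)) = fun _ => (0:ℂ) := by
          funext x; simp [congrFun hP0 x]
        rw [hz]; exact killed_zero _
      | succ a' =>
        have hle : a' + b ≤ n := by omega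
        have h := ih a' b hle (fun x => P (x + s) - P x) (fun x => Q (x + s))
          (hP s) (killed_shift _ Q s hQ)
        have e : a' + b + 1 = a' + 1 + b := by omega
        rw [e] at h
        exact h
    have term2 : KilledBy (a + b) (fun x => P x * (Q (x + s) - Q x)) := by
      cases b with
      | zero =>
        have hQ0 := hQ s
        simp only [KilledBy] at hQ0
        have hz : (fun x => P x * (Q (x+s) - Q x)) = fun _ => (0:ℂ) := by
          funext x; simp [congrFun hQ0 x]
        rw [hz]; exact killed_zero _
      | succ b' =>
        have hle : a + b' ≤ n := by omega
        exact ih a b' hle P (fun x => Q (x + s) - Q x) hP (hQ s)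
    exact killed_add _ _ _ term1 term2

/-- Affine functions of one coordinate are killed by 2 differences. -/
lemma killed_affine {N : ℕ} (j : Fin N) (c d : ℂ) :
    KilledBy 2 (fun x : Fin N → ℤ => c * ((x j : ℂ) - d)) := by
  intro s
  have : (fun x : Fin N → ℤ => c * (((x + s) j : ℂ) - d) - c * ((x j : ℂ) - d))
      = fun _ => c * (s j : ℂ) := by
    funext x; simp only [Pi.add_apply, Int.cast_add]; ring
  rw [this]
  exact killed_const _

/-- The linear functional `f ↦ ∑ f r • P r`. -/
noncomputable def phi {N : ℕ} (P : (Fin N → ℤ) → ℂ) :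
    AddMonoidAlgebra ℂ (Fin N → ℤ) →ₗ[ℂ] ℂ :=
  Finsupp.linearCombination ℂ P ∘ₗ (AddMonoidAlgebra.coeffLinearEquiv ℂ).toLinearMap

lemma phi_single {N : ℕ} (P : (Fin N → ℤ) → ℂ) (a : Fin N → ℤ) (c : ℂ) :
    phi P (AddMonoidAlgebra.single a c) = c * P a := by
  show Finsupp.linearCombination ℂ P (Finsupp.single a c) = _
  rw [Finsupp.linearCombination_single, smul_eq_mul]

lemma phi_shift {N : ℕ} (P : (Fin N → ℤ) → ℂ) (s : Fin N → ℤ)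
    (x : AddMonoidAlgebra ℂ (Fin N → ℤ)) :
    phi P (tpow s * x) = phi (fun y => P (y + s)) x := by
  induction x using AddMonoidAlgebra.induction_linear with
  | zero => simp
  | add f g hf hg =>
    rw [mul_add, map_add, map_add, hf, hg]
  | single a b =>
    have : tpow s * AddMonoidAlgebra.single a b = AddMonoidAlgebra.single (s + a) b := by
      rw [tpow, AddMonoidAlgebra.single_mul_single, one_mul]
    rw [this, phi_single, phi_single, add_comm a s]

lemma phi_sub_fun {N : ℕ} (P Q : (Fin N → ℤ) → ℂ) (x : AddMonoidAlgebra ℂ (Fin N → ℤ)) :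
    phi (fun y => P y - Q y) x = phi P x - phi Q x := by
  induction x using AddMonoidAlgebra.induction_linear with
  | zero => simp
  | add f g hf hg => rw [map_add, map_add, map_add, hf, hg]; ring
  | single a b => rw [phi_single, phi_single, phi_single]; ring

lemma phi_one {N : ℕ} (P : (Fin N → ℤ) → ℂ) : phi P 1 = P 0 := by
  have : (1 : AddMonoidAlgebra ℂ (Fin N → ℤ)) = AddMonoidAlgebra.single 0 1 := rfl
  rw [this, phi_single, one_mul]

lemma phi_vanish {N : ℕ} : ∀ (q : ℕ) (P : (Fin N → ℤ) → ℂ), KilledBy q P →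
    ∀ rs : Fin q → (Fin N → ℤ), phi P (∏ i : Fin q, (1 - tpow (rs i))) = 0 := by
  intro q
  induction q with
  | zero =>
    intro P hP rs
    simp only [KilledBy] at hP
    simp [phi_one, congrFun hP]
  | succ q ih =>
    intro P hP rs
    rw [Fin.prod_univ_succ]
    set s := rs 0
    set X := ∏ i : Fin q, (1 - tpow (rs i.succ)) with hX
    have expand : (1 - tpow s) * X = X - tpow s * X := by ring
    rw [expand, map_sub, phi_shift]
    have h := phi_sub_fun (fun y => P (y + s)) P X
    have hzero : phi (fun y => P (y + s) - P y) X = 0 :=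
      ih _ (hP s) (fun i => rs i.succ)
    rw [hzero] at h
    have : phi (fun y => P (y + s)) X = phi P X := (sub_eq_zero.mp h.symm)
    rw [this, sub_self]

lemma phi_gen {N q : ℕ} (P : (Fin N → ℤ) → ℂ) (hP : KilledBy q P)
    (r : Fin N → ℤ) (rs : Fin q → Fin N → ℤ) :
    phi P (tpow r * ∏ i : Fin q, (1 - tpow (rs i))) = 0 := by
  rw [phi_shift]
  exact phi_vanish q _ (killed_shift q P r hP) rs

lemma killed_prod {N : ℕ} (T : Finset (Fin N → ℤ)) (F : (Fin N → ℤ) → (Fin N → ℤ) → ℂ)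
    (hF : ∀ r ∈ T, KilledBy 2 (F r)) :
    KilledBy (T.card + 1) (fun x => ∏ r ∈ T, F r x) := by
  induction T using Finset.induction_on with
  | empty => simpa using killed_const (N := N) 1
  | @insert a T ha ih =>
    have h1 : KilledBy 2 (F a) := hF a (Finset.mem_insert_self a T)
    have h2 : KilledBy (T.card + 1) (fun x => ∏ r ∈ T, F r x) :=
      ih (fun r hr => hF r (Finset.mem_insert_of_mem hr))
    have key := killed_mul (1 + T.card) 1 T.card le_rfl (F a)
      (fun x => ∏ r ∈ T, F r x) h1 h2
    have e1 : (fun x => F a x * ∏ r ∈ T, F r x) = fun x => ∏ r ∈ insert a T, F r x := by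
      funext x; rw [Finset.prod_insert ha]
    have e2 : 1 + T.card + 1 = (insert a T).card + 1 := by
      rw [Finset.card_insert_of_notMem ha]; omega
    rw [e1, e2] at key
    exact key

/-- An affine interpolation factor: vanishes at `r`, equals `1` at `r0` (when `r ≠ r0`). -/
noncomputable def interp {N : ℕ} (r0 r : Fin N → ℤ) : (Fin N → ℤ) → ℂ :=
  if h : ∃ j, r0 j ≠ r j then
    fun x => (((r0 h.choose : ℤ) : ℂ) - ((r h.choose : ℤ) : ℂ))⁻¹ *
      (((x h.choose : ℤ) : ℂ) - ((r h.choose : ℤ) : ℂ))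
  else fun _ => 1

lemma interp_killed {N : ℕ} (r0 r : Fin N → ℤ) : KilledBy 2 (interp r0 r) := by
  unfold interp; split
  · exact killed_affine _ _ _
  · exact killed_mono 1 _ (killed_const 1)

lemma exists_ne_coord {N : ℕ} {r0 r : Fin N → ℤ} (h : r ≠ r0) : ∃ j, r0 j ≠ r j := by
  by_contra hc
  push_neg at hc
  exact h (funext fun j => (hc j).symm)

lemma interp_self {N : ℕ} (r0 r : Fin N → ℤ) (h : r ≠ r0) : interp r0 r r0 = 1 := by
  have hex := exists_ne_coord h
  rw [interp, dif_pos hex]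
  have hj := hex.choose_spec
  have hne : ((r0 hex.choose : ℤ) : ℂ) - ((r hex.choose : ℤ) : ℂ) ≠ 0 :=
    sub_ne_zero.mpr (by exact_mod_cast hj)
  exact inv_mul_cancel₀ hne

lemma interp_zero {N : ℕ} (r0 r : Fin N → ℤ) (h : r ≠ r0) : interp r0 r r = 0 := by
  have hex := exists_ne_coord h
  rw [interp, dif_pos hex]
  simp

theorem Jq_intersection_trivial (N : ℕ) :
    (⨅ (q : ℕ) (_ : 1 ≤ q), Jq N q) = ⊥ := by
  rw [eq_bot_iff]
  intro f hf
  rw [Submodule.mem_bot]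
  by_contra hne
  simp only [Submodule.mem_iInf] at hf
  obtain ⟨r0, hr0⟩ := Finsupp.support_nonempty_iff.mpr
    (fun (h : f.coeff = 0) => hne (by rw [← AddMonoidAlgebra.ofCoeff_coeff f, h]; rfl))
  set S := f.coeff.support.erase r0 with hS
  set P : (Fin N → ℤ) → ℂ := fun x => ∏ r ∈ S, interp r0 r x with hPdef
  have hPkilled : KilledBy (S.card + 1) P := killed_prod S _ (fun r _ => interp_killed r0 r)
  have hmem : f ∈ Jq N (S.card + 1) := hf (S.card + 1) (by omega)
  have hker : phi P f = 0 := by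
    have hle : Jq N (S.card + 1) ≤ LinearMap.ker (phi P) := by
      rw [Jq, Submodule.span_le]
      intro x hx
      obtain ⟨r, rs, rfl⟩ := hx
      exact LinearMap.mem_ker.mpr (phi_gen P hPkilled r rs)
    exact LinearMap.mem_ker.mp (hle hmem)
  have hP0 : P r0 = 1 :=
    Finset.prod_eq_one fun r hr => interp_self r0 r (Finset.ne_of_mem_erase hr)
  have hcomp : phi P f = f.coeff r0 * P r0 := by
    show Finsupp.linearCombination ℂ P f.coeff = _
    rw [Finsupp.linearCombination_apply, Finsupp.sum]
    rw [Finset.sum_eq_single r0]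
    · rw [smul_eq_mul]
    · intro b hb hbne
      have hbS : b ∈ S := Finset.mem_erase.mpr ⟨hbne, hb⟩
      have : P b = 0 := Finset.prod_eq_zero hbS (interp_zero r0 b hbne)
      rw [this, smul_zero]
    · intro h; exact absurd hr0 h
  rw [hcomp, hP0, mul_one] at hker
  exact (Finsupp.mem_support_iff.mp hr0) hker
end
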